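/- Let q be a prime power, let G ∈ F_q^{k×n} be a matrix of rank k, and let s_1, s_2 ≥ 1 with s_1 + s_2 = k. Then E_1(G) + E_2(G) ≥ n·(2H_n − H_{n−k} − H_{n−min(s_1,s_2)}). -/

import Mathlib

open Finset

/-- The `r`-th harmonic number `H_r = ∑_{i=1}^r 1/i`, as a real number (`H_0 = 0`). -/
noncomputable def harm (r : ℕ) : ℝ := ∑ i ∈ Finset.range r, (1 : ℝ) / (i + 1)

/-- The span of the columns of `G` indexed by the subset `S ⊆ {1,…,n}`. -/
noncomputable def colSpan (F : Type*) [Field F] {k n : ℕ}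
    (G : Matrix (Fin k) (Fin n) F) (S : Finset (Fin n)) : Submodule F (Fin k → F) :=
  Submodule.span F ((fun j => fun i => G i j) '' (S : Set (Fin n)))

/-- `α_V(s)`: the number of `s`-element subsets `S ⊆ {1,…,n}` whose columns span a
subspace containing the target subspace `V`. -/
noncomputable def alphaCount (F : Type*) [Field F] {k n : ℕ}
    (G : Matrix (Fin k) (Fin n) F) (V : Submodule F (Fin k → F)) (s : ℕ) : ℕ :=
  Nat.card {S : Finset (Fin n) // S.card = s ∧ V ≤ colSpan F G S}

/-- The first file subspace `F₁ = span(e_1, …, e_{s₁}) ⊆ F_q^k`. -/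
noncomputable def file1 (F : Type*) [Field F] (k s1 : ℕ) : Submodule F (Fin k → F) :=
  Submodule.span F {v : Fin k → F | ∃ i : Fin k, (i : ℕ) < s1 ∧ v = Pi.single i 1}

/-- The second file subspace `F₂ = span(e_{s₁+1}, …, e_k) ⊆ F_q^k`. -/
noncomputable def file2 (F : Type*) [Field F] (k s1 : ℕ) : Submodule F (Fin k → F) :=
  Submodule.span F {v : Fin k → F | ∃ i : Fin k, s1 ≤ (i : ℕ) ∧ v = Pi.single i 1}

/-- The expected retrieval time `E(G, V) = n·H_n − ∑_{s=1}^{n−1} α_V(s)/C(n−1,s)`. -/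
noncomputable def Etime (F : Type*) [Field F] {k n : ℕ}
    (G : Matrix (Fin k) (Fin n) F) (V : Submodule F (Fin k → F)) : ℝ :=
  (n : ℝ) * harm n -
    ∑ s ∈ Finset.Icc 1 (n - 1), (alphaCount F G V s : ℝ) / ((n - 1).choose s : ℝ)

-- choose ratio
lemma myChooseRatio {n s : ℕ} (hn : 1 ≤ n) (hs : s ≤ n - 1) :
    ((n.choose s : ℝ)) / (((n-1).choose s : ℝ)) = (n:ℝ) / ((n - s : ℕ) : ℝ) := by
  have h1 := Nat.add_one_mul_choose_eq (n-1) s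
  simp only [Nat.succ_eq_add_one, Nat.sub_add_cancel hn] at h1
  rw [Nat.choose_succ_right_eq] at h1
  have hc : (0:ℝ) < ((n-1).choose s : ℝ) := by exact_mod_cast Nat.choose_pos hs
  have hns : (0:ℝ) < ((n - s : ℕ) : ℝ) := by
    have : 0 < n - s := by omega
    exact_mod_cast this
  rw [div_eq_div_iff hc.ne' hns.ne']
  exact_mod_cast h1.symm

lemma mySumInd (n t : ℕ) (ht : 1 ≤ t) :
    ∑ s ∈ Finset.Icc 1 (n-1), (if t ≤ s then (n:ℝ)/((n - s : ℕ):ℝ) else 0)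
      = n * harm (n - t) := by
  rw [← Finset.sum_filter]
  have hfil : (Finset.Icc 1 (n-1)).filter (fun s => t ≤ s) = Finset.Ico t n := by
    ext x
    simp only [Finset.mem_filter, Finset.mem_Icc, Finset.mem_Ico]
    omega
  rw [hfil, Finset.sum_Ico_eq_sum_range, harm, Finset.mul_sum]
  set r := n - t with hr
  conv_rhs => rw [← Finset.sum_range_reflect]
  refine Finset.sum_congr rfl (fun j hj => ?_)
  have hjr : j < r := Finset.mem_range.mp hj
  have h1 : n - (t + j) = r - j := by omega
  have h2 : r - 1 - j + 1 = r - j := by omega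
  have h3 : ((r-1-j:ℕ):ℝ) + 1 = ((r - j : ℕ):ℝ) := by exact_mod_cast h2
  rw [h1, mul_one_div, h3]

lemma myFile1Eq {F : Type*} [Field F] {k s1 : ℕ} (h : s1 ≤ k) :
    file1 F k s1 =
      Submodule.span F (Set.range fun j : Fin s1 => Pi.single (Fin.castLE h j) (1:F)) := by
  unfold file1
  congr 1
  ext v
  constructor
  · rintro ⟨i, hi, rfl⟩
    exact ⟨⟨(i:ℕ), hi⟩, by congr 1⟩
  · rintro ⟨j, rfl⟩
    exact ⟨Fin.castLE h j, j.isLt, rfl⟩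

lemma myFile2Eq {F : Type*} [Field F] {k s1 s2 : ℕ} (hk : s1 + s2 = k) :
    file2 F k s1 =
      Submodule.span F (Set.range fun j : Fin s2 =>
        Pi.single (⟨s1 + (j:ℕ), by omega⟩ : Fin k) (1:F)) := by
  unfold file2
  congr 1
  ext v
  constructor
  · rintro ⟨i, hi, rfl⟩
    refine ⟨⟨(i:ℕ) - s1, by omega⟩, ?_⟩
    show Pi.single (⟨s1 + ((⟨(i:ℕ) - s1, by omega⟩ : Fin s2):ℕ), by omega⟩ : Fin k) 1
        = (Pi.single i (1:F) : Fin k → F)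
    have : (⟨s1 + ((⟨(i:ℕ) - s1, by omega⟩ : Fin s2):ℕ), by omega⟩ : Fin k) = i := by
      ext
      simp only []
      omega
    rw [this]
  · rintro ⟨j, rfl⟩
    exact ⟨⟨s1 + (j:ℕ), by omega⟩, by simp, rfl⟩

lemma myFinrankFile1 {F : Type*} [Field F] {k s1 : ℕ} (h : s1 ≤ k) :
    Module.finrank F (file1 F k s1) = s1 := by
  rw [myFile1Eq h]
  have hli : LinearIndependent F (fun j : Fin s1 => (Pi.single (Fin.castLE h j) 1 : Fin k → F)) := by
    have := (Pi.basisFun F (Fin k)).linearIndependent.comp (Fin.castLE h)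
      (Fin.castLE_injective h)
    convert this using 1
    funext j
    simp [Function.comp]
  rw [finrank_span_eq_card hli, Fintype.card_fin]

lemma myFinrankFile2 {F : Type*} [Field F] {k s1 s2 : ℕ} (hk : s1 + s2 = k) :
    Module.finrank F (file2 F k s1) = s2 := by
  rw [myFile2Eq hk]
  have hinj : Function.Injective (fun j : Fin s2 => (⟨s1 + (j:ℕ), by omega⟩ : Fin k)) := by
    intro a b hab
    have : s1 + (a:ℕ) = s1 + (b:ℕ) := congrArg Fin.val hab
    exact Fin.ext (by omega)
  have hli : LinearIndependent F (fun j : Fin s2 =>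
      (Pi.single (⟨s1 + (j:ℕ), by omega⟩ : Fin k) 1 : Fin k → F)) := by
    have := (Pi.basisFun F (Fin k)).linearIndependent.comp _ hinj
    convert this using 1
    funext j
    simp [Function.comp]
  rw [finrank_span_eq_card hli, Fintype.card_fin]

lemma myFileSup {F : Type*} [Field F] {k s1 : ℕ} :
    file1 F k s1 ⊔ file2 F k s1 = ⊤ := by
  rw [file1, file2, ← Submodule.span_union, eq_top_iff,
    ← (Pi.basisFun F (Fin k)).span_eq]
  apply Submodule.span_le.mpr
  rintro v ⟨i, rfl⟩
  apply Submodule.subset_span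
  by_cases hi : (i:ℕ) < s1
  · exact Or.inl ⟨i, hi, by simp⟩
  · exact Or.inr ⟨i, by omega, by simp⟩

lemma myColSpanLe {F : Type*} [Field F] {k n : ℕ} (G : Matrix (Fin k) (Fin n) F)
    (S : Finset (Fin n)) : Module.finrank F (colSpan F G S) ≤ S.card := by
  classical
  rw [colSpan, ← Finset.coe_image]
  exact le_trans (finrank_span_finset_le_card _) Finset.card_image_le

open Classical in
lemma myAlphaEq {F : Type*} [Field F] {k n : ℕ} (G : Matrix (Fin k) (Fin n) F)
    (V : Submodule F (Fin k → F)) (s : ℕ) :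
    alphaCount F G V s =
      ((Finset.powersetCard s (univ : Finset (Fin n))).filter
        (fun S => V ≤ colSpan F G S)).card := by
  rw [alphaCount, Nat.card_eq_fintype_card, Fintype.card_subtype]
  congr 1
  ext S
  simp only [Finset.mem_filter, Finset.mem_powersetCard_univ, Finset.mem_univ, true_and]

open Classical in
lemma myKey {F : Type*} [Field F] {k n s1 s2 : ℕ} (G : Matrix (Fin k) (Fin n) F)
    (hs1 : 1 ≤ s1) (hs2 : 1 ≤ s2) (hk : s1 + s2 = k) (s : ℕ) :
    alphaCount F G (file1 F k s1) s + alphaCount F G (file2 F k s1) s ≤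
      (if k ≤ s then n.choose s else 0) + (if min s1 s2 ≤ s then n.choose s else 0) := by
  have h1k : s1 ≤ k := by omega
  rw [myAlphaEq, myAlphaEq]
  set P := Finset.powersetCard s (univ : Finset (Fin n)) with hP
  have hPcard : P.card = n.choose s := by
    rw [hP, Finset.card_powersetCard, Finset.card_univ, Fintype.card_fin]
  have hdim : ∀ (V : Submodule F (Fin k → F)) (S : Finset (Fin n)), S ∈ P →
      V ≤ colSpan F G S → Module.finrank F V ≤ s := by
    intro V S hS hV
    have h1 : Module.finrank F V ≤ Module.finrank F (colSpan F G S) :=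
      Submodule.finrank_mono hV
    have h2 := myColSpanLe G S
    have h3 : S.card = s := Finset.mem_powersetCard_univ.mp hS
    omega
  have hm1 : ∀ S ∈ P.filter (fun S => file1 F k s1 ≤ colSpan F G S), s1 ≤ s := by
    intro S hS
    rw [Finset.mem_filter] at hS
    have := hdim _ _ hS.1 hS.2
    rwa [myFinrankFile1 h1k] at this
  have hm2 : ∀ S ∈ P.filter (fun S => file2 F k s1 ≤ colSpan F G S), s2 ≤ s := by
    intro S hS
    rw [Finset.mem_filter] at hS
    have := hdim _ _ hS.1 hS.2
    rwa [myFinrankFile2 hk] at this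
  by_cases hks : k ≤ s
  · rw [if_pos hks, if_pos (by omega : min s1 s2 ≤ s)]
    exact add_le_add ((Finset.card_filter_le _ _).trans hPcard.le)
      ((Finset.card_filter_le _ _).trans hPcard.le)
  · rw [if_neg hks]
    by_cases hms : min s1 s2 ≤ s
    · rw [if_pos hms, zero_add]
      have hdisj : Disjoint (P.filter (fun S => file1 F k s1 ≤ colSpan F G S))
          (P.filter (fun S => file2 F k s1 ≤ colSpan F G S)) := by
        rw [Finset.disjoint_left]
        intro S hS1 hS2
        rw [Finset.mem_filter] at hS1 hS2
        have htop : (⊤ : Submodule F (Fin k → F)) ≤ colSpan F G S := by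
          rw [← myFileSup (F := F) (k := k) (s1 := s1)]
          exact sup_le hS1.2 hS2.2
        have := hdim ⊤ S hS1.1 htop
        rw [finrank_top, Module.finrank_fin_fun] at this
        omega
      calc _ = ((P.filter (fun S => file1 F k s1 ≤ colSpan F G S)) ∪
            (P.filter (fun S => file2 F k s1 ≤ colSpan F G S))).card :=
          (Finset.card_union_of_disjoint hdisj).symm
        _ ≤ P.card := Finset.card_le_card
            (Finset.union_subset (Finset.filter_subset _ _) (Finset.filter_subset _ _))
        _ = n.choose s := hPcard
    · rw [if_neg hms, add_zero]
      have e1 : P.filter (fun S => file1 F k s1 ≤ colSpan F G S) = ∅ := by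
        rw [Finset.filter_eq_empty_iff]
        intro S hS hle
        exact absurd (hm1 S (Finset.mem_filter.mpr ⟨hS, hle⟩)) (by omega)
      have e2 : P.filter (fun S => file2 F k s1 ≤ colSpan F G S) = ∅ := by
        rw [Finset.filter_eq_empty_iff]
        intro S hS hle
        exact absurd (hm2 S (Finset.mem_filter.mpr ⟨hS, hle⟩)) (by omega)
      rw [e1, e2]
      simp

/-- For any rank-`k` code `G` and partition `s₁ + s₂ = k` with `s₁, s₂ ≥ 1`,
`E₁(G) + E₂(G) ≥ n·(2H_n − H_{n−k} − H_{n−min(s₁,s₂)})`. -/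
theorem stmt1 (q k n s1 s2 : ℕ) (hq : IsPrimePow q)
    (F : Type*) [Field F] [Fintype F] (hF : Fintype.card F = q)
    (G : Matrix (Fin k) (Fin n) F) (hrank : G.rank = k)
    (hs1 : 1 ≤ s1) (hs2 : 1 ≤ s2) (hk : s1 + s2 = k) :
    Etime F G (file1 F k s1) + Etime F G (file2 F k s1) ≥
      (n : ℝ) * (2 * harm n - harm (n - k) - harm (n - min s1 s2)) := by
  classical
  set m := min s1 s2 with hm
  have hm1 : 1 ≤ m := le_min hs1 hs2
  have hk1 : 1 ≤ k := by omega
  have hsum : (∑ s ∈ Finset.Icc 1 (n-1),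
        (alphaCount F G (file1 F k s1) s : ℝ) / ((n - 1).choose s : ℝ))
      + (∑ s ∈ Finset.Icc 1 (n-1),
        (alphaCount F G (file2 F k s1) s : ℝ) / ((n - 1).choose s : ℝ))
      ≤ n * harm (n - k) + n * harm (n - m) := by
    rw [← Finset.sum_add_distrib, ← mySumInd n k hk1, ← mySumInd n m hm1,
      ← Finset.sum_add_distrib]
    apply Finset.sum_le_sum
    intro s hs
    obtain ⟨hsa, hsb⟩ := Finset.mem_Icc.mp hs
    have hn1 : 1 ≤ n := by omega
    have hCd : (0:ℝ) < ((n-1).choose s : ℝ) := by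
      exact_mod_cast Nat.choose_pos hsb
    have hkey := myKey (n := n) G hs1 hs2 hk s
    have hratio := myChooseRatio hn1 hsb
    rw [← add_div]
    have hRHS : ((if k ≤ s then (n:ℝ)/((n - s : ℕ):ℝ) else 0)
          + (if m ≤ s then (n:ℝ)/((n - s : ℕ):ℝ) else 0))
        = (((if k ≤ s then n.choose s else 0) + (if m ≤ s then n.choose s else 0) : ℕ) : ℝ)
          / ((n-1).choose s : ℝ) := by
      rw [Nat.cast_add, apply_ite (Nat.cast : ℕ → ℝ), apply_ite (Nat.cast : ℕ → ℝ),
        Nat.cast_zero, add_div]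
      congr 1 <;> split_ifs <;> simp [hratio]
    rw [hRHS]
    have hcast : ((alphaCount F G (file1 F k s1) s : ℝ) + (alphaCount F G (file2 F k s1) s : ℝ))
        ≤ (((if k ≤ s then n.choose s else 0) + (if m ≤ s then n.choose s else 0) : ℕ) : ℝ) := by
      exact_mod_cast hkey
    gcongr
  have hexp : (n:ℝ) * (2 * harm n - harm (n - k) - harm (n - m))
      = 2 * ((n:ℝ) * harm n) - n * harm (n - k) - n * harm (n - m) := by ring
  rw [hexp]
  unfold Etime
  linarith
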